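/- arXiv:1404.4338 — 3 statements merged into one kernel-verified Lean document; each statement's English description precedes it below -/
import Mathlib

section
/- Let N be a positive natural number and let R : (Fin N → ℝ) → ℝ be a function all of whose mixed partial derivatives of order at most one in each variable exist and are continuous on the closed orthant [0,∞)^N. For a subset S of the index set, write ∂_S R for the mixed partial derivative of R taken once with respect to each variable indexed by S. Then for every point X in [0,∞)^N, R(X) equals the sum, over all subsets S of {0,…,N−1} (including the empty set, whose summand is R(0,…,0)), of the integral over μ ∈ [0,∞)^S of ∂_S R evaluated at the point whose i-th coordinate is μ_i for i ∈ S and 0 for i ∉ S, multiplied by the product over i ∈ S of σ(X_i − μ_i). -/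
open MeasureTheory Set

/-- The Heaviside step function: `1` for positive arguments, `1/2` at `0`,
and `0` for negative arguments. -/
noncomputable def heaviside (t : ℝ) : ℝ :=
  if 0 < t then 1 else if t = 0 then 1 / 2 else 0


namespace HeavisideAux

variable {N : ℕ}

def ext (S : Finset (Fin N)) (μ : ↥S → ℝ) (Y : Fin N → ℝ) : Fin N → ℝ :=
  fun i => if h : i ∈ S then μ ⟨i, h⟩ else Y i

def box (S : Finset (Fin N)) (X : Fin N → ℝ) : Set (↥S → ℝ) :=
  Set.univ.pi fun i => Set.Icc 0 (X i)

lemma measurableSet_box (S : Finset (Fin N)) (X : Fin N → ℝ) : MeasurableSet (box S X) :=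
  MeasurableSet.univ_pi fun _ => measurableSet_Icc

lemma isCompact_box (S : Finset (Fin N)) (X : Fin N → ℝ) : IsCompact (box S X) :=
  isCompact_univ_pi fun _ => isCompact_Icc

lemma continuous_ext (S : Finset (Fin N)) (Y : Fin N → ℝ) :
    Continuous (fun μ : ↥S → ℝ => ext S μ Y) := by
  refine continuous_pi fun i => ?_
  unfold ext
  by_cases h : i ∈ S
  · simp only [dif_pos h]; exact continuous_apply _
  · simp only [dif_neg h]; exact continuous_const

lemma ext_nonneg {S : Finset (Fin N)} {μ : ↥S → ℝ} {Y : Fin N → ℝ}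
    (hY : ∀ j, 0 ≤ Y j) (hμ : ∀ i : ↥S, 0 ≤ μ i) : ∀ j, 0 ≤ ext S μ Y j := by
  intro j; unfold ext
  by_cases h : j ∈ S
  · simp only [dif_pos h]; exact hμ _
  · simp only [dif_neg h]; exact hY j

instance uniqSing (k : Fin N) : Unique ↥({k} : Finset (Fin N)) :=
  ⟨⟨⟨k, Finset.mem_singleton_self k⟩⟩, fun x => Subtype.ext (Finset.mem_singleton.mp x.2)⟩


lemma heaviside_integral (S : Finset (Fin N)) (X : Fin N → ℝ)
    (f : (↥S → ℝ) → ℝ) :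
    (∫ μ : ↥S → ℝ in Set.univ.pi (fun _ => Set.Ici (0:ℝ)),
        f μ * ∏ i : S, heaviside (X i - μ i))
      = ∫ μ : ↥S → ℝ in box S X, f μ := by
  rw [← integral_indicator (MeasurableSet.univ_pi fun _ => measurableSet_Ici),
      ← integral_indicator (measurableSet_box S X)]
  refine integral_congr_ae ?_
  have h0 : ∀ᵐ μ : ↥S → ℝ, ∀ i : ↥S, μ i ≠ X i := by
    rw [ae_all_iff]
    intro i
    have := Measure.ae_eval_ne (fun _ : ↥S => (volume : Measure ℝ)) i (X i)
    simpa [← volume_pi] using this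
  filter_upwards [h0] with μ hμ
  by_cases hbox : μ ∈ box S X
  · have h1 : μ ∈ univ.pi fun _ : ↥S => Ici (0:ℝ) := fun i _ => (hbox i (mem_univ i)).1
    rw [indicator_of_mem h1, indicator_of_mem hbox]
    have hone : ∀ i : ↥S, heaviside (X i - μ i) = 1 := by
      intro i
      have h2 := (hbox i (mem_univ i)).2
      have : 0 < X i - μ i := sub_pos.2 (lt_of_le_of_ne h2 (hμ i))
      simp [heaviside, this]
    rw [Finset.prod_congr rfl (fun i _ => hone i), Finset.prod_const_one, mul_one]
  · rw [indicator_of_notMem hbox]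
    by_cases h1 : μ ∈ univ.pi fun _ : ↥S => Ici (0:ℝ)
    · rw [indicator_of_mem h1]
      have hex : ∃ i : ↥S, μ i ∉ Icc 0 (X i) := by
        by_contra h; push_neg at h
        exact hbox fun i _ => h i
      obtain ⟨i, hi⟩ := hex
      have hge : (0:ℝ) ≤ μ i := h1 i (mem_univ i)
      have hlt : X i < μ i := by
        by_contra h; exact hi ⟨hge, not_lt.1 h⟩
      have hz : heaviside (X i - μ i) = 0 := by
        have h3 : X i - μ i < 0 := sub_neg.2 hlt
        simp [heaviside, not_lt.2 h3.le, h3.ne, h3.not_gt]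
      rw [Finset.prod_eq_zero (Finset.mem_univ i) hz, mul_zero]
    · rw [indicator_of_notMem h1]

lemma contOn_box (D : Finset (Fin N) → (Fin N → ℝ) → ℝ)
    (hcont : ∀ S : Finset (Fin N),
      ContinuousOn (D S) {x : Fin N → ℝ | ∀ j, 0 ≤ x j})
    (S : Finset (Fin N)) (X Y : Fin N → ℝ) (hY : ∀ j, 0 ≤ Y j) :
    ContinuousOn (fun μ : ↥S → ℝ => D S (ext S μ Y)) (box S X) :=
  (hcont S).comp (continuous_ext S Y).continuousOn
    (fun _ hμ => ext_nonneg hY (fun i => (hμ i (mem_univ i)).1))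

lemma integrableOn_box (D : Finset (Fin N) → (Fin N → ℝ) → ℝ)
    (hcont : ∀ S : Finset (Fin N),
      ContinuousOn (D S) {x : Fin N → ℝ | ∀ j, 0 ≤ x j})
    (S : Finset (Fin N)) (X Y : Fin N → ℝ) (hY : ∀ j, 0 ≤ Y j) :
    IntegrableOn (fun μ : ↥S → ℝ => D S (ext S μ Y)) (box S X) :=
  (contOn_box D hcont S X Y hY).integrableOn_compact (isCompact_box S X)

section eval
variable {S : Finset (Fin N)} {k : Fin N} (hd : Disjoint S ({k} : Finset (Fin N)))

lemma union_eval_left (f : ↥S → ℝ) (g : ↥({k} : Finset (Fin N)) → ℝ) (x : ↥S) :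
    MeasurableEquiv.piFinsetUnion (fun _ => ℝ) hd (f, g)
      ⟨x.1, Finset.mem_union.mpr (Or.inl x.2)⟩ = f x :=
  Equiv.piCongrLeft_sumInl (fun _ => ℝ) (Equiv.Finset.union S {k} hd) f g x

lemma union_eval_right (f : ↥S → ℝ) (g : ↥({k} : Finset (Fin N)) → ℝ)
    (y : ↥({k} : Finset (Fin N))) :
    MeasurableEquiv.piFinsetUnion (fun _ => ℝ) hd (f, g)
      ⟨y.1, Finset.mem_union.mpr (Or.inr y.2)⟩ = g y :=
  Equiv.piCongrLeft_sumInr (fun _ => ℝ) (Equiv.Finset.union S {k} hd) f g y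

end eval

lemma continuous_update_fn (z : Fin N → ℝ) (k : Fin N) :
    Continuous (fun t : ℝ => Function.update z k t) := by
  refine continuous_pi fun j => ?_
  simp only [Function.update_apply]
  by_cases h : j = k
  · simp only [h, if_pos rfl]; exact continuous_id
  · simp only [if_neg h]; exact continuous_const

lemma ftc_point (D : Finset (Fin N) → (Fin N → ℝ) → ℝ)
    (hderiv : ∀ (S : Finset (Fin N)) (i : Fin N), i ∉ S →
      ∀ x : Fin N → ℝ, (∀ j, 0 ≤ x j) →
        HasDerivWithinAt (fun t => D S (Function.update x i t))
          (D (insert i S) x) (Set.Ici 0) (x i))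
    (hcont : ∀ S : Finset (Fin N),
      ContinuousOn (D S) {x : Fin N → ℝ | ∀ j, 0 ≤ x j})
    {S : Finset (Fin N)} {k : Fin N} (hk : k ∉ S)
    (z : Fin N → ℝ) (hz : ∀ j, 0 ≤ z j) (hzk : z k = 0) (b : ℝ) (hb : 0 ≤ b) :
    D S (Function.update z k b) - D S z
      = ∫ t in (0:ℝ)..b, D (insert k S) (Function.update z k t) := by
  have hmap : ∀ t ∈ Icc (0:ℝ) b, (∀ j, 0 ≤ Function.update z k t j) := by
    intro t ht j
    rw [Function.update_apply]
    split
    · exact ht.1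
    · exact hz j
  have hc1 : ContinuousOn (fun t => D S (Function.update z k t)) (Icc 0 b) :=
    (hcont S).comp (continuous_update_fn z k).continuousOn hmap
  have hder : ∀ t ∈ Ioo (0:ℝ) b,
      HasDerivWithinAt (fun t => D S (Function.update z k t))
        (D (insert k S) (Function.update z k t)) (Ioi t) t := by
    intro t ht
    have h1 := hderiv S k hk (Function.update z k t)
      (hmap t ⟨ht.1.le, ht.2.le⟩)
    simp only [Function.update_idem, Function.update_self] at h1
    exact (h1.hasDerivAt (Ici_mem_nhds ht.1)).hasDerivWithinAt
  have hint : IntervalIntegrable (fun t => D (insert k S) (Function.update z k t)) volume 0 b := by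
    apply ContinuousOn.intervalIntegrable
    rw [uIcc_of_le hb]
    exact (hcont (insert k S)).comp (continuous_update_fn z k).continuousOn hmap
  rw [intervalIntegral.integral_eq_sub_of_hasDeriv_right_of_le hb hc1 hder hint]
  congr 2
  rw [← hzk, Function.update_eq_self]

lemma split (D : Finset (Fin N) → (Fin N → ℝ) → ℝ)
    (hderiv : ∀ (S : Finset (Fin N)) (i : Fin N), i ∉ S →
      ∀ x : Fin N → ℝ, (∀ j, 0 ≤ x j) →
        HasDerivWithinAt (fun t => D S (Function.update x i t))
          (D (insert i S) x) (Set.Ici 0) (x i))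
    (hcont : ∀ S : Finset (Fin N),
      ContinuousOn (D S) {x : Fin N → ℝ | ∀ j, 0 ≤ x j})
    {S : Finset (Fin N)} {k : Fin N} (hk : k ∉ S)
    (X Y : Fin N → ℝ) (hX : ∀ j, 0 ≤ X j) (hY : ∀ j, 0 ≤ Y j) (hYk : Y k = X k) :
    ∫ μ : ↥S → ℝ in box S X, D S (ext S μ Y)
      = (∫ μ : ↥S → ℝ in box S X, D S (ext S μ (Function.update Y k 0)))
        + ∫ ν : ↥(S ∪ {k}) → ℝ in box (S ∪ {k}) X,
            D (S ∪ {k}) (ext (S ∪ {k}) ν (Function.update Y k 0)) := by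
  classical
  set Y₀ := Function.update Y k 0 with hY₀def
  have hY₀ : ∀ j, 0 ≤ Y₀ j := by
    intro j; rw [hY₀def, Function.update_apply]; split
    · exact le_rfl
    · exact hY j
  have hd : Disjoint S ({k} : Finset (Fin N)) := Finset.disjoint_singleton_right.mpr hk
  have hins : insert k S = S ∪ {k} := by rw [Finset.insert_eq, Finset.union_comm]
  -- pointwise FTC on the box
  have key : ∀ μ ∈ box S X, D S (ext S μ Y) - D S (ext S μ Y₀)
      = ∫ t in (0:ℝ)..(X k), D (S ∪ {k}) (Function.update (ext S μ Y₀) k t) := by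
    intro μ hμ
    have hμ' : ∀ i : ↥S, 0 ≤ μ i := fun i => (hμ i (mem_univ i)).1
    have hz : ∀ j, 0 ≤ ext S μ Y₀ j := ext_nonneg hY₀ hμ'
    have hzk : ext S μ Y₀ k = 0 := by
      unfold ext; rw [dif_neg hk, hY₀def, Function.update_self]
    have hupd : Function.update (ext S μ Y₀) k (X k) = ext S μ Y := by
      funext j
      rw [Function.update_apply]
      by_cases hjk : j = k
      · subst hjk; rw [if_pos rfl]; unfold ext; rw [dif_neg hk, hYk]
      · rw [if_neg hjk]; unfold ext
        by_cases hj : j ∈ S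
        · rw [dif_pos hj, dif_pos hj]
        · rw [dif_neg hj, dif_neg hj, hY₀def, Function.update_of_ne hjk]
    have h := ftc_point D hderiv hcont hk (ext S μ Y₀) hz hzk (X k) (hX k)
    rw [hupd, hins] at h
    exact h
  rw [← sub_eq_iff_eq_add']
  rw [← integral_sub (integrableOn_box D hcont S X Y hY) (integrableOn_box D hcont S X Y₀ hY₀)]
  rw [setIntegral_congr_fun (measurableSet_box S X) key]
  -- now transform the RHS
  set e := MeasurableEquiv.piFinsetUnion (fun _ : Fin N => ℝ) hd with he
  have mp : MeasurePreserving e := volume_preserving_piFinsetUnion (fun _ : Fin N => ℝ) hd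
  have hcomp : ∀ (f : ↥S → ℝ) (g : ↥({k} : Finset (Fin N)) → ℝ),
      ext (S ∪ {k}) (e (f, g)) Y₀
        = Function.update (ext S f Y₀) k (g ⟨k, Finset.mem_singleton_self k⟩) := by
    intro f g; funext j
    by_cases hjk : j = k
    · subst hjk
      rw [Function.update_self]
      unfold ext
      rw [dif_pos (Finset.mem_union_right _ (Finset.mem_singleton_self _))]
      exact union_eval_right hd f g ⟨j, Finset.mem_singleton_self j⟩
    · by_cases hj : j ∈ S
      · rw [Function.update_of_ne hjk]
        unfold ext
        rw [dif_pos (Finset.mem_union_left _ hj), dif_pos hj]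
        exact union_eval_left hd f g ⟨j, hj⟩
      · rw [Function.update_of_ne hjk]
        unfold ext
        have hnot : j ∉ S ∪ ({k} : Finset (Fin N)) := by
          simp [Finset.mem_union, hj, hjk]
        rw [dif_neg hnot, dif_neg hj]
  have hpre : e ⁻¹' (box (S ∪ {k}) X) = (box S X) ×ˢ (box ({k} : Finset (Fin N)) X) := by
    ext ⟨f, g⟩
    simp only [mem_preimage, box, Set.mem_univ_pi, mem_prod]
    constructor
    · intro h
      refine ⟨fun x => ?_, fun y => ?_⟩
      · have h1 := h ⟨x.1, Finset.mem_union.mpr (Or.inl x.2)⟩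
        rwa [union_eval_left hd f g x] at h1
      · have h1 := h ⟨y.1, Finset.mem_union.mpr (Or.inr y.2)⟩
        rwa [union_eval_right hd f g y] at h1
    · rintro ⟨h1, h2⟩ i
      rcases Finset.mem_union.mp i.2 with hi | hi
      · have h3 := h1 ⟨i.1, hi⟩
        rwa [← union_eval_left hd f g ⟨i.1, hi⟩] at h3
      · have h3 := h2 ⟨i.1, hi⟩
        rwa [← union_eval_right hd f g ⟨i.1, hi⟩] at h3
  have hrhs : (∫ ν : ↥(S ∪ {k}) → ℝ in box (S ∪ {k}) X, D (S ∪ {k}) (ext (S ∪ {k}) ν Y₀))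
      = ∫ p in (box S X) ×ˢ (box ({k} : Finset (Fin N)) X),
          D (S ∪ {k}) (Function.update (ext S p.1 Y₀) k
            (p.2 ⟨k, Finset.mem_singleton_self k⟩)) := by
    rw [← mp.setIntegral_preimage_emb e.measurableEmbedding
      (fun ν => D (S ∪ {k}) (ext (S ∪ {k}) ν Y₀)) (box (S ∪ {k}) X), hpre]
    refine setIntegral_congr_fun ((measurableSet_box S X).prod (measurableSet_box {k} X)) ?_
    rintro ⟨f, g⟩ -
    simp only
    rw [hcomp f g]
  have hm : Continuous (fun p : (↥S → ℝ) × (↥({k} : Finset (Fin N)) → ℝ) =>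
      Function.update (ext S p.1 Y₀) k (p.2 ⟨k, Finset.mem_singleton_self k⟩)) := by
    refine continuous_pi fun j => ?_
    simp only [Function.update_apply]
    by_cases hjk : j = k
    · simp only [hjk, if_pos rfl]
      exact (continuous_apply _).comp continuous_snd
    · simp only [if_neg hjk]
      unfold ext
      by_cases hj : j ∈ S
      · simp only [dif_pos hj]
        exact (continuous_apply _).comp continuous_fst
      · simp only [dif_neg hj]; exact continuous_const
  have hGcont : ContinuousOn (fun p : (↥S → ℝ) × (↥({k} : Finset (Fin N)) → ℝ) =>
      D (S ∪ {k}) (Function.update (ext S p.1 Y₀) k (p.2 ⟨k, Finset.mem_singleton_self k⟩)))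
      ((box S X) ×ˢ (box ({k} : Finset (Fin N)) X)) := by
    refine (hcont (S ∪ {k})).comp hm.continuousOn ?_
    rintro ⟨f, g⟩ ⟨hf, hg⟩ j
    show 0 ≤ Function.update (ext S f Y₀) k (g ⟨k, Finset.mem_singleton_self k⟩) j
    rw [Function.update_apply]
    split
    · exact (hg ⟨k, Finset.mem_singleton_self k⟩ (mem_univ _)).1
    · exact ext_nonneg hY₀ (fun i => (hf i (mem_univ i)).1) j
  have hGint : IntegrableOn (fun p : (↥S → ℝ) × (↥({k} : Finset (Fin N)) → ℝ) =>
      D (S ∪ {k}) (Function.update (ext S p.1 Y₀) k (p.2 ⟨k, Finset.mem_singleton_self k⟩)))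
      ((box S X) ×ˢ (box ({k} : Finset (Fin N)) X)) :=
    hGcont.integrableOn_compact ((isCompact_box S X).prod (isCompact_box {k} X))
  have hinner : ∀ f : ↥S → ℝ,
      (∫ g : ↥({k} : Finset (Fin N)) → ℝ in box ({k} : Finset (Fin N)) X,
        D (S ∪ {k}) (Function.update (ext S f Y₀) k (g ⟨k, Finset.mem_singleton_self k⟩)))
      = ∫ t in (0:ℝ)..(X k), D (S ∪ {k}) (Function.update (ext S f Y₀) k t) := by
    intro f
    have mp2 : MeasurePreserving (MeasurableEquiv.funUnique ↥({k} : Finset (Fin N)) ℝ) :=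
      volume_preserving_funUnique _ _
    have hb2 : box ({k} : Finset (Fin N)) X
        = (MeasurableEquiv.funUnique ↥({k} : Finset (Fin N)) ℝ) ⁻¹' (Icc 0 (X k)) := by
      ext g
      simp only [box, Set.mem_univ_pi, mem_preimage]
      constructor
      · intro h; exact h default
      · intro h i; rw [Unique.eq_default i]; exact h
    rw [hb2]
    have h4 := mp2.setIntegral_preimage_emb
      (MeasurableEquiv.funUnique ↥({k} : Finset (Fin N)) ℝ).measurableEmbedding
      (fun t => D (S ∪ {k}) (Function.update (ext S f Y₀) k t)) (Icc 0 (X k))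
    rw [MeasureTheory.integral_Icc_eq_integral_Ioc,
      ← intervalIntegral.integral_of_le (hX k)] at h4
    exact h4
  rw [hrhs, Measure.volume_eq_prod, setIntegral_prod _ hGint]
  exact setIntegral_congr_fun (measurableSet_box S X) (fun f _ => (hinner f).symm)

end HeavisideAux

namespace HeavisideAux

lemma box_const_integral (X : Fin N → ℝ) (c : ℝ) :
    (∫ _ : ↥(∅ : Finset (Fin N)) → ℝ in box (∅ : Finset (Fin N)) X, c) = c := by
  haveI : IsEmpty ↥(∅ : Finset (Fin N)) := ⟨fun x => absurd x.2 (Finset.notMem_empty _)⟩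
  rw [setIntegral_const]
  rw [show (volume : Measure (↥(∅ : Finset (Fin N)) → ℝ)) = Measure.pi (fun _ => volume) from
    volume_pi]
  unfold box
  rw [measureReal_def, Measure.pi_pi]
  simp

lemma claim (D : Finset (Fin N) → (Fin N → ℝ) → ℝ)
    (hderiv : ∀ (S : Finset (Fin N)) (i : Fin N), i ∉ S →
      ∀ x : Fin N → ℝ, (∀ j, 0 ≤ x j) →
        HasDerivWithinAt (fun t => D S (Function.update x i t))
          (D (insert i S) x) (Set.Ici 0) (x i))
    (hcont : ∀ S : Finset (Fin N),
      ContinuousOn (D S) {x : Fin N → ℝ | ∀ j, 0 ≤ x j}) :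
    ∀ T : Finset (Fin N), ∀ X : Fin N → ℝ, (∀ j, 0 ≤ X j) →
      D ∅ X = ∑ S ∈ T.powerset, ∫ μ : ↥S → ℝ in box S X,
        D S (ext S μ (fun j => if j ∈ T then 0 else X j)) := by
  classical
  intro T
  induction T using Finset.induction_on with
  | empty =>
    intro X hX
    rw [Finset.powerset_empty, Finset.sum_singleton]
    have hext : ∀ μ : ↥(∅ : Finset (Fin N)) → ℝ,
        ext (∅ : Finset (Fin N)) μ (fun j => if j ∈ (∅ : Finset (Fin N)) then 0 else X j)
          = X := by
      intro μ; funext j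
      unfold ext
      rw [dif_neg (Finset.notMem_empty j)]
      simp
    simp only [hext]
    exact (box_const_integral X (D ∅ X)).symm
  | @insert a T ha IH =>
    intro X hX
    rw [Finset.sum_powerset_insert ha, ← Finset.sum_add_distrib, IH X hX]
    refine Finset.sum_congr rfl fun S hS => ?_
    have hS' : S ⊆ T := Finset.mem_powerset.mp hS
    have ha' : a ∉ S := fun h => ha (hS' h)
    have hYnn : ∀ j, 0 ≤ (if j ∈ T then 0 else X j) := by
      intro j; split
      · exact le_rfl
      · exact hX j
    have hYk : (fun j => if j ∈ T then 0 else X j) a = X a := by simp [ha]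
    have hsplit := split D hderiv hcont ha' X
      (fun j => if j ∈ T then 0 else X j) hX hYnn hYk
    have hupdY : Function.update (fun j => if j ∈ T then 0 else X j) a 0
        = (fun j => if j ∈ insert a T then 0 else X j) := by
      funext j
      rw [Function.update_apply]
      by_cases hj : j = a
      · simp [hj]
      · simp [hj, Finset.mem_insert]
    rw [hupdY] at hsplit
    have hins : insert a S = S ∪ {a} := by rw [Finset.insert_eq, Finset.union_comm]
    rw [hins]
    exact hsplit

end HeavisideAux

/-- Main theorem of the paper (Heaviside form).  Let `R : (Fin N → ℝ) → ℝ`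
(`N > 0`) have all mixed partial derivatives of order at most one in each
variable, existing and continuous on the closed orthant `[0,∞)^N`; the family
`D S` records the mixed partial `∂_S R` (so `D ∅ = R`, and for `i ∉ S`,
`D (insert i S)` is the partial derivative of `D S` in the `i`-th variable).
Then for every `X` in the orthant, `R X` is the sum over all subsets
`S ⊆ {0,…,N−1}` of the integral over `μ ∈ [0,∞)^S` of `∂_S R`, evaluated at
the point with `i`-th coordinate `μ i` for `i ∈ S` and `0` otherwise, times
`∏_{i ∈ S} σ(Xᵢ − μᵢ)`.  (The `S = ∅` summand is `R(0,…,0)`.) -/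
theorem heaviside_decomposition (N : ℕ) (hN : 0 < N)
    (R : (Fin N → ℝ) → ℝ)
    (D : Finset (Fin N) → (Fin N → ℝ) → ℝ)
    (hD0 : D ∅ = R)
    (hderiv : ∀ (S : Finset (Fin N)) (i : Fin N), i ∉ S →
      ∀ x : Fin N → ℝ, (∀ j, 0 ≤ x j) →
        HasDerivWithinAt (fun t => D S (Function.update x i t))
          (D (insert i S) x) (Set.Ici 0) (x i))
    (hcont : ∀ S : Finset (Fin N),
      ContinuousOn (D S) {x : Fin N → ℝ | ∀ j, 0 ≤ x j}) :
    ∀ X : Fin N → ℝ, (∀ j, 0 ≤ X j) →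
      R X = ∑ S : Finset (Fin N),
        ∫ μ : ↥S → ℝ in Set.univ.pi (fun _ => Set.Ici (0 : ℝ)),
          D S (fun i => if h : i ∈ S then μ ⟨i, h⟩ else 0) *
            ∏ i : S, heaviside (X i - μ i) := by
  intro X hX
  have hclaim := HeavisideAux.claim D hderiv hcont Finset.univ X hX
  have hYuniv : (fun j => if j ∈ (Finset.univ : Finset (Fin N)) then 0 else X j)
      = fun _ => (0:ℝ) := by funext j; simp
  rw [hYuniv] at hclaim
  rw [← hD0, hclaim, ← Finset.powerset_univ]
  refine Finset.sum_congr rfl fun S _ => ?_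
  exact (HeavisideAux.heaviside_integral S X
    (fun μ => D S (fun i => if h : i ∈ S then μ ⟨i, h⟩ else 0))).symm
end

section
/- Let N be a positive natural number and let R : (Fin N → ℝ) → ℝ be a function all of whose mixed partial derivatives of order at most one in each variable exist and are continuous on the closed orthant [0,∞)^N. For a subset S of the index set, write ∂_S R for the mixed partial derivative of R taken once with respect to each variable indexed by S. Then for every point X in [0,∞)^N, R(X) equals the sum, over all subsets S of {0,…,N−1} (including the empty set, whose summand is R(0,…,0)), of the integral over the box ∏_{i∈S}[0,X_i] of ∂_S R evaluated at the point whose i-th coordinate is μ_i for i ∈ S and 0 for i ∉ S. -/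
open MeasureTheory Function Set

section BoxDecompAux

lemma volume_restrict_univ_pi {ι : Type*} [Fintype ι] (s : ι → Set ℝ)
    (hs : ∀ i, MeasurableSet (s i)) :
    (volume : Measure (ι → ℝ)).restrict (Set.univ.pi s)
      = Measure.pi (fun i => (volume : Measure ℝ).restrict (s i)) := by
  refine (Measure.pi_eq (μ := fun i => (volume : Measure ℝ).restrict (s i))
    fun t ht => ?_).symm
  rw [Measure.restrict_apply (MeasurableSet.univ_pi ht), ← Set.pi_inter_distrib,
    volume_pi_pi]
  exact Finset.prod_congr rfl fun i _ => (Measure.restrict_apply (ht i)).symm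

variable {N : ℕ}

lemma continuous_updateFinset_aux (c : Fin N → ℝ) (S : Finset (Fin N)) :
    Continuous (fun μ : ↥S → ℝ => updateFinset c S μ) := by
  refine continuous_pi fun i => ?_
  by_cases h : i ∈ S
  · simpa [updateFinset, h] using continuous_apply (⟨i, h⟩ : ↥S)
  · simpa [updateFinset, h] using (continuous_const : Continuous fun _ : ↥S → ℝ => c i)

lemma split_lemma
    (D : Finset (Fin N) → (Fin N → ℝ) → ℝ)
    (hderiv : ∀ (S : Finset (Fin N)) (i : Fin N), i ∉ S →
      ∀ x : Fin N → ℝ, (∀ j, 0 ≤ x j) →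
        HasDerivWithinAt (fun t => D S (Function.update x i t))
          (D (insert i S) x) (Set.Ici 0) (x i))
    (hcont : ∀ S : Finset (Fin N),
      ContinuousOn (D S) {x : Fin N → ℝ | ∀ j, 0 ≤ x j})
    (X : Fin N → ℝ) (hX : ∀ j, 0 ≤ X j)
    (S : Finset (Fin N)) (k : Fin N) (hk : k ∉ S)
    (c : Fin N → ℝ) (hc : ∀ j, 0 ≤ c j) (hck : c k = X k) :
    (∫ μ : ↥S → ℝ in Set.univ.pi (fun i : ↥S => Set.Icc 0 (X i)),
        D S (updateFinset c S μ))
      = (∫ μ : ↥S → ℝ in Set.univ.pi (fun i : ↥S => Set.Icc 0 (X i)),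
           D S (updateFinset (update c k 0) S μ))
        + ∫ ν : ↥(insert k S) → ℝ in
            Set.univ.pi (fun i : ↥(insert k S) => Set.Icc 0 (X i)),
            D (insert k S) (updateFinset (update c k 0) (insert k S) ν) := by
  set b : Fin N → ℝ := update c k 0 with hbdef
  have hb : ∀ j, 0 ≤ b j := by
    intro j
    rcases eq_or_ne j k with rfl | hj
    · simp [b]
    · simpa [b, update_of_ne hj] using hc j
  have hbk : b k = 0 := by simp [b]
  set boxS : Set (↥S → ℝ) := Set.univ.pi (fun i : ↥S => Set.Icc 0 (X i)) with hboxS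
  have hboxSm : MeasurableSet boxS := MeasurableSet.univ_pi fun i => measurableSet_Icc
  have hboxSc : IsCompact boxS := isCompact_univ_pi fun i => isCompact_Icc
  set F₂ : (↥S → ℝ) × ℝ → ℝ :=
    fun p => D (insert k S) (update (updateFinset b S p.1) k p.2) with hF₂def
  -- pointwise FTC
  have point : ∀ μ ∈ boxS, D S (updateFinset c S μ)
      = D S (updateFinset b S μ) + ∫ t in Set.Icc (0:ℝ) (X k), F₂ (μ, t) := by
    intro μ hμ
    set x : Fin N → ℝ := updateFinset b S μ with hxdef
    have hμ' : ∀ i : ↥S, μ i ∈ Set.Icc 0 (X i) := fun i => hμ i (Set.mem_univ _)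
    have hx : ∀ j, 0 ≤ x j := by
      intro j
      by_cases h : j ∈ S
      · simpa [x, updateFinset, h] using (hμ' ⟨j, h⟩).1
      · simpa [x, updateFinset, h] using hb j
    have hxk : x k = 0 := by simp [x, updateFinset, hk, hbk]
    have hupdc : updateFinset c S μ = update x k (X k) := by
      funext j
      rcases eq_or_ne j k with rfl | hj
      · simp [x, updateFinset, hk, hck]
      · by_cases h : j ∈ S <;>
          simp [x, updateFinset, h, update_of_ne hj, b]
    have key : ∀ t : ℝ, 0 ≤ t → HasDerivWithinAt (fun u => D S (update x k u))
        (D (insert k S) (update x k t)) (Set.Ici 0) t := by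
      intro t ht
      have hy : ∀ j, 0 ≤ update x k t j := by
        intro j
        rcases eq_or_ne j k with rfl | hj
        · simpa using ht
        · simpa [update_of_ne hj] using hx j
      have h := hderiv S k hk (update x k t) hy
      simpa [update_idem, update_self] using h
    have hXk : (0:ℝ) ≤ X k := hX k
    have hcontu : Continuous (fun t : ℝ => update x k t) := by
      refine continuous_pi fun j => ?_
      rcases eq_or_ne j k with rfl | hj
      · simp only [update_self]; exact continuous_id
      · simpa [update_of_ne hj] using (continuous_const : Continuous fun _ : ℝ => x j)
    have hmaps : ∀ t ∈ Set.Icc (0:ℝ) (X k),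
        update x k t ∈ {z : Fin N → ℝ | ∀ j, 0 ≤ z j} := by
      intro t ht j
      rcases eq_or_ne j k with rfl | hj
      · simpa using ht.1
      · simpa [update_of_ne hj] using hx j
    have hgcont : ContinuousOn (fun u => D S (update x k u)) (Set.Icc 0 (X k)) :=
      (hcont S).comp hcontu.continuousOn hmaps
    have hg'cont : ContinuousOn (fun u => D (insert k S) (update x k u))
        (Set.Icc 0 (X k)) :=
      (hcont (insert k S)).comp hcontu.continuousOn hmaps
    have ftc := intervalIntegral.integral_eq_sub_of_hasDeriv_right_of_le hXk hgcont
      (fun t ht => (key t ht.1.le).mono fun u hu => (ht.1.trans hu).le)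
      (by
        have h2 : ContinuousOn (fun u => D (insert k S) (update x k u))
            (Set.uIcc (0:ℝ) (X k)) := by rwa [Set.uIcc_of_le hXk]
        exact h2.intervalIntegrable)
    have hIcc : (∫ t in Set.Icc (0:ℝ) (X k), F₂ (μ, t))
        = ∫ u in (0:ℝ)..(X k), D (insert k S) (update x k u) := by
      rw [MeasureTheory.integral_Icc_eq_integral_Ioc, intervalIntegral.integral_of_le hXk]
    have hx0 : update x k 0 = x := by
      rw [← hxk]; exact Function.update_eq_self k x
    rw [hIcc, ftc, hx0, hupdc]
    ring
  -- integrability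
  have hint1 : Integrable (fun μ : ↥S → ℝ => D S (updateFinset b S μ))
      (volume.restrict boxS) := by
    have hco : ContinuousOn (fun μ : ↥S → ℝ => D S (updateFinset b S μ)) boxS := by
      refine (hcont S).comp (continuous_updateFinset_aux b S).continuousOn ?_
      intro μ hμ j
      by_cases h : j ∈ S
      · simpa [updateFinset, h] using (hμ ⟨j, h⟩ (Set.mem_univ _)).1
      · simpa [updateFinset, h] using hb j
    exact hco.integrableOn_compact hboxSc
  have hF₂cont : ContinuousOn F₂ (boxS ×ˢ Set.Icc (0:ℝ) (X k)) := by
    have hmap : Continuous (fun p : (↥S → ℝ) × ℝ => update (updateFinset b S p.1) k p.2) := by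
      refine continuous_pi fun j => ?_
      rcases eq_or_ne j k with rfl | hj
      · simpa [update_self] using continuous_snd
      · by_cases h : j ∈ S
        · simp only [update_of_ne hj, updateFinset, h, ↓reduceDIte]
          exact (continuous_apply (⟨j, h⟩ : ↥S)).comp continuous_fst
        · simpa [update_of_ne hj, updateFinset, h] using
            (continuous_const : Continuous fun _ : (↥S → ℝ) × ℝ => b j)
    refine (hcont (insert k S)).comp hmap.continuousOn ?_
    rintro ⟨μ, t⟩ ⟨hμ, ht⟩ j
    rcases eq_or_ne j k with rfl | hj
    · simpa using ht.1
    · by_cases h : j ∈ S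
      · simpa [update_of_ne hj, updateFinset, h] using (hμ ⟨j, h⟩ (Set.mem_univ _)).1
      · simpa [update_of_ne hj, updateFinset, h] using hb j
  have hF₂int : Integrable F₂
      ((volume.restrict boxS).prod (volume.restrict (Set.Icc (0:ℝ) (X k)))) := by
    rw [Measure.prod_restrict]
    exact hF₂cont.integrableOn_compact (hboxSc.prod isCompact_Icc)
  have hH : Integrable
      (fun μ : ↥S → ℝ => ∫ t in Set.Icc (0:ℝ) (X k), F₂ (μ, t))
      (volume.restrict boxS) := hF₂int.integral_prod_left
  -- Fubini
  have hpiS : (volume : Measure (↥S → ℝ)).restrict boxS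
      = Measure.pi fun i : ↥S => (volume : Measure ℝ).restrict (Set.Icc 0 (X i)) := by
    rw [hboxS]; exact volume_restrict_univ_pi _ (fun i => measurableSet_Icc)
  have fub : (∫ μ : ↥S → ℝ in boxS, ∫ t in Set.Icc (0:ℝ) (X k), F₂ (μ, t))
      = ∫ ν : ↥(insert k S) → ℝ in
          Set.univ.pi (fun i : ↥(insert k S) => Set.Icc 0 (X i)),
          D (insert k S) (updateFinset b (insert k S) ν) := by
    have hdisj : Disjoint S ({k} : Finset (Fin N)) := by
      simpa [Finset.disjoint_singleton_right] using hk
    have hins : insert k S = S ∪ {k} := by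
      rw [Finset.insert_eq, Finset.union_comm]
    rw [hins]
    have hpiU : (volume : Measure (↥(S ∪ {k}) → ℝ)).restrict
        (Set.univ.pi fun i : ↥(S ∪ {k}) => Set.Icc 0 (X i))
        = Measure.pi fun i : ↥(S ∪ {k}) => (volume : Measure ℝ).restrict (Set.Icc 0 (X i)) :=
      volume_restrict_univ_pi _ (fun i => measurableSet_Icc)
    have hF2int' : Integrable F₂
        ((Measure.pi fun i : ↥S => (volume : Measure ℝ).restrict (Set.Icc 0 (X i))).prod
          (volume.restrict (Set.Icc (0:ℝ) (X k)))) := by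
      rw [hpiS] at hF₂int; exact hF₂int
    have hpik : (Measure.pi fun i : ↥({k} : Finset (Fin N)) =>
          (volume : Measure ℝ).restrict (Set.Icc 0 (X i)))
        = Measure.pi fun _ : ↥({k} : Finset (Fin N)) =>
            (volume : Measure ℝ).restrict (Set.Icc 0 (X k)) := by
      congr 1
      funext i
      have h : (i : Fin N) = k := Finset.mem_singleton.mp i.2
      rw [h]
    have hψeq : (fun p : (↥S → ℝ) × (↥({k} : Finset (Fin N)) → ℝ) =>
          (p.1, p.2 ⟨k, Finset.mem_singleton_self k⟩))
        = Prod.map (id : (↥S → ℝ) → (↥S → ℝ))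
            (MeasurableEquiv.funUnique (↥({k} : Finset (Fin N))) ℝ) := by
      funext p
      show (p.1, p.2 ⟨k, Finset.mem_singleton_self k⟩) = (p.1, p.2 default)
      exact congrArg _ (congrArg p.2 (Subsingleton.elim _ _))
    have mp2 : MeasurePreserving
        (fun p : (↥S → ℝ) × (↥({k} : Finset (Fin N)) → ℝ) =>
          (p.1, p.2 ⟨k, Finset.mem_singleton_self k⟩))
        ((Measure.pi fun i : ↥S => (volume : Measure ℝ).restrict (Set.Icc 0 (X i))).prod
          (Measure.pi fun _ : ↥({k} : Finset (Fin N)) =>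
            (volume : Measure ℝ).restrict (Set.Icc 0 (X k))))
        ((Measure.pi fun i : ↥S => (volume : Measure ℝ).restrict (Set.Icc 0 (X i))).prod
          ((volume : Measure ℝ).restrict (Set.Icc 0 (X k)))) := by
      rw [hψeq]
      exact (MeasurePreserving.id _).prod
        (measurePreserving_funUnique ((volume : Measure ℝ).restrict (Set.Icc 0 (X k))) _)
    have hemb : MeasurableEmbedding
        (fun p : (↥S → ℝ) × (↥({k} : Finset (Fin N)) → ℝ) =>
          (p.1, p.2 ⟨k, Finset.mem_singleton_self k⟩)) := by
      rw [hψeq]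
      exact (MeasurableEquiv.prodCongr (MeasurableEquiv.refl (↥S → ℝ))
        (MeasurableEquiv.funUnique (↥({k} : Finset (Fin N))) ℝ)).measurableEmbedding
    have mp1 :=
      measurePreserving_piFinsetUnion (α := fun _ : Fin N => ℝ) hdisj
        (fun i => (volume : Measure ℝ).restrict (Set.Icc 0 (X i)))
    have hφ : ∀ p : (↥S → ℝ) × (↥({k} : Finset (Fin N)) → ℝ),
        updateFinset b (S ∪ {k})
            (MeasurableEquiv.piFinsetUnion (fun _ => ℝ) hdisj p)
          = update (updateFinset b S p.1) k (p.2 ⟨k, Finset.mem_singleton_self k⟩) := by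
      intro p
      rw [show (MeasurableEquiv.piFinsetUnion (fun _ => ℝ) hdisj p : ∀ _ : ↥(S ∪ {k}), ℝ)
          = Equiv.piFinsetUnion (fun _ => ℝ) hdisj (p.1, p.2) from rfl,
        ← updateFinset_updateFinset, updateFinset_singleton]
    calc (∫ μ : ↥S → ℝ in boxS, ∫ t in Set.Icc (0:ℝ) (X k), F₂ (μ, t))
        = ∫ μ : ↥S → ℝ, (∫ t in Set.Icc (0:ℝ) (X k), F₂ (μ, t))
            ∂(Measure.pi fun i : ↥S => (volume : Measure ℝ).restrict (Set.Icc 0 (X i))) := by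
          rw [hpiS]
      _ = ∫ q : (↥S → ℝ) × ℝ, F₂ q
            ∂((Measure.pi fun i : ↥S => (volume : Measure ℝ).restrict (Set.Icc 0 (X i))).prod
              (volume.restrict (Set.Icc (0:ℝ) (X k)))) :=
          (MeasureTheory.integral_prod F₂ hF2int').symm
      _ = ∫ p : (↥S → ℝ) × (↥({k} : Finset (Fin N)) → ℝ),
            F₂ (p.1, p.2 ⟨k, Finset.mem_singleton_self k⟩)
            ∂((Measure.pi fun i : ↥S => (volume : Measure ℝ).restrict (Set.Icc 0 (X i))).prod
              (Measure.pi fun _ : ↥({k} : Finset (Fin N)) =>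
                (volume : Measure ℝ).restrict (Set.Icc 0 (X k)))) :=
          (mp2.integral_comp hemb F₂).symm
      _ = ∫ p : (↥S → ℝ) × (↥({k} : Finset (Fin N)) → ℝ),
            D (S ∪ {k}) (updateFinset b (S ∪ {k})
              (MeasurableEquiv.piFinsetUnion (fun _ => ℝ) hdisj p))
            ∂((Measure.pi fun i : ↥S => (volume : Measure ℝ).restrict (Set.Icc 0 (X i))).prod
              (Measure.pi fun i : ↥({k} : Finset (Fin N)) =>
                (volume : Measure ℝ).restrict (Set.Icc 0 (X i)))) := by
          rw [hpik]
          refine integral_congr_ae (Filter.Eventually.of_forall fun p => ?_)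
          simp only [hφ, hF₂def, hins]
      _ = ∫ ν : ↥(S ∪ {k}) → ℝ, D (S ∪ {k}) (updateFinset b (S ∪ {k}) ν)
            ∂(Measure.pi fun i : ↥(S ∪ {k}) =>
                (volume : Measure ℝ).restrict (Set.Icc 0 (X i))) :=
          mp1.integral_comp (MeasurableEquiv.measurableEmbedding _)
            (fun ν => D (S ∪ {k}) (updateFinset b (S ∪ {k}) ν))
      _ = ∫ ν : ↥(S ∪ {k}) → ℝ in
            Set.univ.pi (fun i : ↥(S ∪ {k}) => Set.Icc 0 (X i)),
            D (S ∪ {k}) (updateFinset b (S ∪ {k}) ν) := by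
          rw [hpiU]
  calc (∫ μ : ↥S → ℝ in boxS, D S (updateFinset c S μ))
      = ∫ μ : ↥S → ℝ in boxS,
          (D S (updateFinset b S μ) + ∫ t in Set.Icc (0:ℝ) (X k), F₂ (μ, t)) :=
        setIntegral_congr_fun hboxSm point
    _ = (∫ μ : ↥S → ℝ in boxS, D S (updateFinset b S μ))
          + ∫ μ : ↥S → ℝ in boxS, ∫ t in Set.Icc (0:ℝ) (X k), F₂ (μ, t) :=
        integral_add hint1 hH
    _ = _ := by rw [fub]

lemma key_lemma
    (D : Finset (Fin N) → (Fin N → ℝ) → ℝ)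
    (hderiv : ∀ (S : Finset (Fin N)) (i : Fin N), i ∉ S →
      ∀ x : Fin N → ℝ, (∀ j, 0 ≤ x j) →
        HasDerivWithinAt (fun t => D S (Function.update x i t))
          (D (insert i S) x) (Set.Ici 0) (x i))
    (hcont : ∀ S : Finset (Fin N),
      ContinuousOn (D S) {x : Fin N → ℝ | ∀ j, 0 ≤ x j})
    (T : Finset (Fin N)) :
    ∀ X : Fin N → ℝ, (∀ j, 0 ≤ X j) →
      D ∅ X = ∑ S ∈ T.powerset,
        ∫ μ : ↥S → ℝ in Set.univ.pi (fun i : ↥S => Set.Icc 0 (X i)),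
          D S (updateFinset (fun i => if i ∈ T then 0 else X i) S μ) := by
  induction T using Finset.induction_on with
  | empty =>
    intro X hX
    rw [Finset.powerset_empty, Finset.sum_singleton]
    have h1 : (Set.univ.pi fun i : ↥(∅ : Finset (Fin N)) => Set.Icc 0 (X i))
        = Set.univ := by
      ext x
      simp only [Set.mem_pi, Set.mem_univ, iff_true]
      exact fun i _ => absurd i.2 (Finset.notMem_empty _)
    rw [h1, Measure.restrict_univ, integral_unique]
    have h2 : (volume : Measure (↥(∅ : Finset (Fin N)) → ℝ)) Set.univ = 1 := by
      rw [volume_pi, Measure.pi_univ]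
      simp
    rw [measureReal_def, h2, ENNReal.toReal_one, one_smul, updateFinset_empty]
    simp
  | @insert k T hk ih =>
    intro X hX
    rw [Finset.sum_powerset_insert hk, ih X hX, ← Finset.sum_add_distrib]
    refine Finset.sum_congr rfl fun S hS => ?_
    have hkS : k ∉ S := fun h => hk (Finset.mem_powerset.mp hS h)
    have hc : ∀ j, 0 ≤ (fun i => if i ∈ T then 0 else X i) j := by
      intro j; dsimp only; split
      · exact le_refl 0
      · exact hX j
    have hck : (fun i => if i ∈ T then 0 else X i) k = X k := by simp [hk]
    have hupd : update (fun i => if i ∈ T then 0 else X i) k 0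
        = fun i => if i ∈ insert k T then 0 else X i := by
      funext i
      rcases eq_or_ne i k with rfl | hi
      · simp
      · simp [update_of_ne hi, Finset.mem_insert, hi]
    have h := split_lemma D hderiv hcont X hX S k hkS _ hc hck
    rw [hupd] at h
    exact h

end BoxDecompAux

/-- Main theorem of the paper (box form, after evaluating the Heaviside
functions).  Let `R : (Fin N → ℝ) → ℝ` (`N > 0`) have all mixed partial
derivatives of order at most one in each variable, existing and continuous on
the closed orthant `[0,∞)^N`; the family `D S` records the mixed partial
`∂_S R` (so `D ∅ = R`, and for `i ∉ S`, `D (insert i S)` is the partial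
derivative of `D S` in the `i`-th variable).  Then for every `X` in the
orthant, `R X` is the sum over all subsets `S ⊆ {0,…,N−1}` of the integral
over the box `∏_{i ∈ S} [0, Xᵢ]` of `∂_S R`, evaluated at the point with
`i`-th coordinate `μ i` for `i ∈ S` and `0` otherwise.  (The `S = ∅` summand
is `R(0,…,0)`.) -/
theorem box_decomposition (N : ℕ) (hN : 0 < N)
    (R : (Fin N → ℝ) → ℝ)
    (D : Finset (Fin N) → (Fin N → ℝ) → ℝ)
    (hD0 : D ∅ = R)
    (hderiv : ∀ (S : Finset (Fin N)) (i : Fin N), i ∉ S →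
      ∀ x : Fin N → ℝ, (∀ j, 0 ≤ x j) →
        HasDerivWithinAt (fun t => D S (Function.update x i t))
          (D (insert i S) x) (Set.Ici 0) (x i))
    (hcont : ∀ S : Finset (Fin N),
      ContinuousOn (D S) {x : Fin N → ℝ | ∀ j, 0 ≤ x j}) :
    ∀ X : Fin N → ℝ, (∀ j, 0 ≤ X j) →
      R X = ∑ S : Finset (Fin N),
        ∫ μ : ↥S → ℝ in Set.univ.pi (fun i : ↥S => Set.Icc 0 (X i)),
          D S (fun i => if h : i ∈ S then μ ⟨i, h⟩ else 0) := by
  intro X hX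
  have h := key_lemma D hderiv hcont Finset.univ X hX
  rw [hD0] at h
  rw [h, ← Finset.powerset_univ]
  refine Finset.sum_congr rfl fun S _ => ?_
  congr 1
  funext μ
  congr 1
  funext i
  by_cases hi : i ∈ S <;> simp [updateFinset, hi]
end

section
/- Let R : ℝ × ℝ → ℝ have continuous partial derivatives ∂R/∂μ₁, ∂R/∂μ₂ and continuous mixed partial derivative ∂²R/∂μ₁∂μ₂ on [0,∞)². Then for all X₁ ≥ 0 and X₂ ≥ 0: R(X₁, X₂) = R(0,0) + ∫₀^∞ (∂R/∂μ₁)(μ₁, 0) σ(X₁ − μ₁) dμ₁ + ∫₀^∞ (∂R/∂μ₂)(0, μ₂) σ(X₂ − μ₂) dμ₂ + ∫₀^∞ ∫₀^∞ (∂²R/∂μ₁∂μ₂)(μ₁, μ₂) σ(X₁ − μ₁) σ(X₂ − μ₂) dμ₁ dμ₂. -/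
open MeasureTheory

/-- Integrating against a Heaviside factor truncates the integral. -/
lemma heaviside_int (f : ℝ → ℝ) {X : ℝ} (hX : 0 ≤ X) :
    (∫ μ in Set.Ici (0 : ℝ), f μ * heaviside (X - μ)) = ∫ μ in (0:ℝ)..X, f μ := by
  have hae : (fun μ => f μ * heaviside (X - μ)) =ᵐ[volume] (Set.Iio X).indicator f := by
    filter_upwards [compl_mem_ae_iff.mpr (measure_singleton X)] with μ hμ
    have hne : μ ≠ X := hμ
    by_cases h : μ < X
    · have : 0 < X - μ := by linarith
      simp [heaviside, this, Set.indicator_of_mem, h]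
    · have hgt : X < μ := lt_of_le_of_ne (not_lt.mp h) (Ne.symm hne)
      have h1 : ¬ (0 < X - μ) := by linarith
      have h2 : X - μ ≠ 0 := by intro hc; apply hne; linarith
      simp [heaviside, h1, h2, Set.indicator_of_notMem, Set.notMem_Iio.mpr hgt.le]
  rw [integral_congr_ae (Filter.EventuallyEq.restrict hae),
    setIntegral_indicator measurableSet_Iio, Set.Ici_inter_Iio,
    intervalIntegral.integral_of_le hX, integral_Ioc_eq_integral_Ioo,
    ← MeasureTheory.integral_Ico_eq_integral_Ioo]

/-- Fundamental theorem of calculus on `[0, X]` for one-sided derivatives. -/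
lemma ftc_aux (f f' : ℝ → ℝ)
    (hd : ∀ x ∈ Set.Ici (0:ℝ), HasDerivWithinAt f (f' x) (Set.Ici 0) x)
    (hc : ContinuousOn f' (Set.Ici 0)) {X : ℝ} (hX : 0 ≤ X) :
    ∫ t in (0:ℝ)..X, f' t = f X - f 0 := by
  apply intervalIntegral.integral_eq_sub_of_hasDeriv_right_of_le hX
  · exact fun x hx => ((hd x hx.1).continuousWithinAt).mono Set.Icc_subset_Ici_self
  · exact fun x hx =>
      (((hd x hx.1.le).hasDerivAt (Ici_mem_nhds hx.1)).hasDerivWithinAt)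
  · exact (hc.mono Set.Icc_subset_Ici_self).intervalIntegrable_of_Icc hX

/-- Slice continuity in the first variable. -/
lemma slice_fst {g : ℝ → ℝ → ℝ}
    (hg : ContinuousOn (fun p : ℝ × ℝ => g p.1 p.2) (Set.Ici 0 ×ˢ Set.Ici 0))
    {c : ℝ} (hc : c ∈ Set.Ici (0:ℝ)) :
    ContinuousOn (fun x => g x c) (Set.Ici 0) :=
  hg.comp (continuous_id.prodMk continuous_const).continuousOn
    (fun x hx => ⟨hx, hc⟩)

/-- Slice continuity in the second variable. -/
lemma slice_snd {g : ℝ → ℝ → ℝ}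
    (hg : ContinuousOn (fun p : ℝ × ℝ => g p.1 p.2) (Set.Ici 0 ×ˢ Set.Ici 0))
    {c : ℝ} (hc : c ∈ Set.Ici (0:ℝ)) :
    ContinuousOn (fun y => g c y) (Set.Ici 0) :=
  hg.comp (continuous_const.prodMk continuous_id).continuousOn
    (fun y hy => ⟨hc, hy⟩)

/-- The two-variable decomposition (the inductive step of the paper's main
theorem from `N = 1` to `N = 2`).  Here `R₁ = ∂R/∂μ₁`, `R₂ = ∂R/∂μ₂` and
`R₁₂ = ∂²R/∂μ₁∂μ₂` denote the partial derivatives of `R`, assumed to exist and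
be continuous on `[0,∞)²`.  Then for all `X₁ ≥ 0`, `X₂ ≥ 0`:
`R(X₁,X₂) = R(0,0) + ∫₀^∞ R₁(μ₁,0) σ(X₁−μ₁) dμ₁ + ∫₀^∞ R₂(0,μ₂) σ(X₂−μ₂) dμ₂
  + ∫₀^∞ ∫₀^∞ R₁₂(μ₁,μ₂) σ(X₁−μ₁) σ(X₂−μ₂) dμ₁ dμ₂`. -/
theorem decomposition_two_var (R R₁ R₂ R₁₂ : ℝ → ℝ → ℝ)
    (hR₁ : ∀ x₂ ∈ Set.Ici (0 : ℝ), ∀ x₁ ∈ Set.Ici (0 : ℝ),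
      HasDerivWithinAt (fun t => R t x₂) (R₁ x₁ x₂) (Set.Ici 0) x₁)
    (hR₂ : ∀ x₁ ∈ Set.Ici (0 : ℝ), ∀ x₂ ∈ Set.Ici (0 : ℝ),
      HasDerivWithinAt (fun t => R x₁ t) (R₂ x₁ x₂) (Set.Ici 0) x₂)
    (hR₁₂ : ∀ x₂ ∈ Set.Ici (0 : ℝ), ∀ x₁ ∈ Set.Ici (0 : ℝ),
      HasDerivWithinAt (fun t => R₂ t x₂) (R₁₂ x₁ x₂) (Set.Ici 0) x₁)
    (hcont₁ : ContinuousOn (fun p : ℝ × ℝ => R₁ p.1 p.2)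
      (Set.Ici 0 ×ˢ Set.Ici 0))
    (hcont₂ : ContinuousOn (fun p : ℝ × ℝ => R₂ p.1 p.2)
      (Set.Ici 0 ×ˢ Set.Ici 0))
    (hcont₁₂ : ContinuousOn (fun p : ℝ × ℝ => R₁₂ p.1 p.2)
      (Set.Ici 0 ×ˢ Set.Ici 0)) :
    ∀ X₁ ∈ Set.Ici (0 : ℝ), ∀ X₂ ∈ Set.Ici (0 : ℝ),
      R X₁ X₂ = R 0 0
        + (∫ μ₁ in Set.Ici (0 : ℝ), R₁ μ₁ 0 * heaviside (X₁ - μ₁))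
        + (∫ μ₂ in Set.Ici (0 : ℝ), R₂ 0 μ₂ * heaviside (X₂ - μ₂))
        + ∫ μ₂ in Set.Ici (0 : ℝ), ∫ μ₁ in Set.Ici (0 : ℝ),
            R₁₂ μ₁ μ₂ * heaviside (X₁ - μ₁) * heaviside (X₂ - μ₂) := by
  intro X₁ hX₁ X₂ hX₂
  -- Step A : first single integral
  have stepA : ∫ t in (0:ℝ)..X₁, R₁ t 0 = R X₁ 0 - R 0 0 :=
    ftc_aux _ _ (hR₁ 0 Set.self_mem_Ici) (slice_fst hcont₁ Set.self_mem_Ici) hX₁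
  -- Step B : inner FTC in the first variable, for each μ₂ ≥ 0
  have stepB : ∀ μ₂ ∈ Set.Ici (0:ℝ),
      ∫ t in (0:ℝ)..X₁, R₁₂ t μ₂ = R₂ X₁ μ₂ - R₂ 0 μ₂ :=
    fun μ₂ hμ₂ => ftc_aux _ _ (hR₁₂ μ₂ hμ₂) (slice_fst hcont₁₂ hμ₂) hX₁
  -- Step C : FTC in the second variable at X₁
  have stepC : ∫ t in (0:ℝ)..X₂, R₂ X₁ t = R X₁ X₂ - R X₁ 0 :=
    ftc_aux _ _ (hR₂ X₁ hX₁) (slice_snd hcont₂ hX₁) hX₂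
  -- Step D : split the integral of R₂ X₁ ·
  have hi1 : IntervalIntegrable (fun μ₂ => R₂ X₁ μ₂) volume 0 X₂ :=
    ((slice_snd hcont₂ hX₁).mono Set.Icc_subset_Ici_self).intervalIntegrable_of_Icc hX₂
  have hi0 : IntervalIntegrable (fun μ₂ => R₂ 0 μ₂) volume 0 X₂ :=
    ((slice_snd hcont₂ Set.self_mem_Ici).mono Set.Icc_subset_Ici_self).intervalIntegrable_of_Icc hX₂
  have stepD : ∫ μ₂ in (0:ℝ)..X₂, (∫ t in (0:ℝ)..X₁, R₁₂ t μ₂)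
      = (∫ μ₂ in (0:ℝ)..X₂, R₂ X₁ μ₂) - ∫ μ₂ in (0:ℝ)..X₂, R₂ 0 μ₂ := by
    rw [← intervalIntegral.integral_sub hi1 hi0]
    apply intervalIntegral.integral_congr
    intro μ₂ hμ₂
    rw [Set.uIcc_of_le hX₂] at hμ₂
    exact stepB μ₂ hμ₂.1
  -- Rewrite the three Heaviside integrals as truncated integrals
  have h1 : (∫ μ₁ in Set.Ici (0 : ℝ), R₁ μ₁ 0 * heaviside (X₁ - μ₁))
      = ∫ t in (0:ℝ)..X₁, R₁ t 0 := heaviside_int _ hX₁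
  have h2 : (∫ μ₂ in Set.Ici (0 : ℝ), R₂ 0 μ₂ * heaviside (X₂ - μ₂))
      = ∫ t in (0:ℝ)..X₂, R₂ 0 t := heaviside_int _ hX₂
  have h3 : (∫ μ₂ in Set.Ici (0 : ℝ), ∫ μ₁ in Set.Ici (0 : ℝ),
        R₁₂ μ₁ μ₂ * heaviside (X₁ - μ₁) * heaviside (X₂ - μ₂))
      = ∫ μ₂ in (0:ℝ)..X₂, (∫ t in (0:ℝ)..X₁, R₁₂ t μ₂) := by
    have inner : ∀ μ₂ : ℝ,
        (∫ μ₁ in Set.Ici (0 : ℝ),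
          R₁₂ μ₁ μ₂ * heaviside (X₁ - μ₁) * heaviside (X₂ - μ₂))
        = (∫ t in (0:ℝ)..X₁, R₁₂ t μ₂) * heaviside (X₂ - μ₂) := by
      intro μ₂
      rw [MeasureTheory.integral_mul_const, heaviside_int _ hX₁]
    calc (∫ μ₂ in Set.Ici (0 : ℝ), ∫ μ₁ in Set.Ici (0 : ℝ),
            R₁₂ μ₁ μ₂ * heaviside (X₁ - μ₁) * heaviside (X₂ - μ₂))
        = ∫ μ₂ in Set.Ici (0 : ℝ),
            (∫ t in (0:ℝ)..X₁, R₁₂ t μ₂) * heaviside (X₂ - μ₂) := by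
          exact integral_congr_ae (Filter.EventuallyEq.restrict
            (Filter.Eventually.of_forall inner))
      _ = ∫ μ₂ in (0:ℝ)..X₂, (∫ t in (0:ℝ)..X₁, R₁₂ t μ₂) := heaviside_int _ hX₂
  rw [h1, h2, h3, stepA, stepD, stepC]
  ring
end
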